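/- For positive integers n, r, λ, the vector w with entries w_ℓ = 1/Σ_{j=0}^{⌊r/λ⌋} C(ℓ,j), ℓ = 0,...,n, is a feasible fractional transversal weight for the ALD ball hypergraph, and consequently A_λ(n, 2r+1) ≤ 2^n · Σ_{ℓ=0}^n C(n,ℓ) / Σ_{j=0}^{⌊r/λ⌋} C(ℓ,j). -/

import Mathlib

open Finset

def ind (p : Prop) [Decidable p] : ℤ := if p then 1 else 0

def aldSym (lam : ℕ) (a b c d : Bool) : ℤ :=
  (1 + lam) * (ind (a = b) + ind (c = d))
    + lam * ind (a = !b ∧ !b = !c ∧ !c = d)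
    - 2 * (1 + lam) * ind (a = b ∧ b = c ∧ c = d)

def ALD (lam n : ℕ) (x y : (Fin n → Bool) × (Fin n → Bool)) : ℤ :=
  ∑ i, aldSym lam (x.1 i) (x.2 i) (y.1 i) (y.2 i)

def wt {n : ℕ} (a b : Fin n → Bool) : ℕ :=
  (Finset.univ.filter fun i => a i ≠ b i).card

/-! ### Auxiliary definitions -/

lemma aldSym_self (lam : ℕ) (a b : Bool) : aldSym lam a b a b = 0 := by
  cases a <;> cases b <;> simp [aldSym, ind] <;> ring

lemma aldSym_swap (lam : ℕ) (a b : Bool) (h : a ≠ b) :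
    aldSym lam a b (!a) (!b) = lam := by
  cases a <;> cases b <;> simp_all [aldSym, ind]

def flipB {n : ℕ} (T : Finset (Fin n)) (x : (Fin n → Bool) × (Fin n → Bool)) :
    (Fin n → Bool) × (Fin n → Bool) :=
  (fun i => if i ∈ T then !(x.1 i) else x.1 i,
   fun i => if i ∈ T then !(x.2 i) else x.2 i)

def Dset {n : ℕ} (x : (Fin n → Bool) × (Fin n → Bool)) : Finset (Fin n) :=
  Finset.univ.filter fun i => x.1 i ≠ x.2 i

lemma flipB_flipB {n : ℕ} (T T' : Finset (Fin n)) (x : (Fin n → Bool) × (Fin n → Bool)) :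
    flipB T' (flipB T x) = flipB (symmDiff T T') x := by
  unfold flipB
  refine Prod.ext ?_ ?_ <;> funext i <;>
    by_cases hT : i ∈ T <;> by_cases hT' : i ∈ T' <;>
      simp [hT, hT', Finset.mem_symmDiff]

lemma flipB_empty {n : ℕ} (x : (Fin n → Bool) × (Fin n → Bool)) : flipB ∅ x = x := by
  unfold flipB; simp

lemma Dset_flipB {n : ℕ} (T : Finset (Fin n)) (x : (Fin n → Bool) × (Fin n → Bool)) :
    Dset (flipB T x) = Dset x := by
  unfold Dset flipB
  ext i
  by_cases hT : i ∈ T <;> simp [hT]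

lemma flipB_inj {n : ℕ} (x : (Fin n → Bool) × (Fin n → Bool)) {T T' : Finset (Fin n)}
    (h : flipB T x = flipB T' x) : T = T' := by
  ext i
  have h1 := congrFun (congrArg Prod.fst h) i
  simp only [flipB] at h1
  by_cases hT : i ∈ T <;> by_cases hT' : i ∈ T' <;>
    simp only [hT, hT', if_true, if_false, if_pos, if_neg, not_false_iff] <;>
    simp [hT, hT'] at h1

lemma ALD_flipB (lam n : ℕ) (x : (Fin n → Bool) × (Fin n → Bool)) (T : Finset (Fin n))
    (hT : T ⊆ Dset x) : ALD lam n x (flipB T x) = lam * T.card := by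
  unfold ALD
  have : ∀ i, aldSym lam (x.1 i) (x.2 i) ((flipB T x).1 i) ((flipB T x).2 i)
      = if i ∈ T then (lam : ℤ) else 0 := by
    intro i
    by_cases hi : i ∈ T
    · have hne : x.1 i ≠ x.2 i := by
        have := hT hi
        simpa [Dset] using this
      simp [flipB, hi, aldSym_swap lam _ _ hne]
    · simp [flipB, hi, aldSym_self]
  rw [Finset.sum_congr rfl fun i _ => this i]
  rw [Finset.sum_ite_mem, Finset.univ_inter, Finset.sum_const]
  ring

/-- The ball: all flips of at most `k` class-1 positions. -/
def ball {n : ℕ} (k : ℕ) (x : (Fin n → Bool) × (Fin n → Bool)) :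
    Finset ((Fin n → Bool) × (Fin n → Bool)) :=
  ((Dset x).powerset.filter fun T => T.card ≤ k).image fun T => flipB T x

lemma card_ball {n : ℕ} (k : ℕ) (x : (Fin n → Bool) × (Fin n → Bool)) :
    (ball k x).card = ∑ j ∈ Finset.range (k + 1), (Dset x).card.choose j := by
  unfold ball
  rw [Finset.card_image_of_injOn (fun T _ T' _ h => flipB_inj x h)]
  have hsplit : (Dset x).powerset.filter (fun T => T.card ≤ k)
      = (Finset.range (k + 1)).biUnion fun j => (Dset x).powersetCard j := by
    ext T
    simp only [Finset.mem_filter, Finset.mem_powerset, Finset.mem_biUnion,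
      Finset.mem_range, Finset.mem_powersetCard, Nat.lt_succ_iff]
    constructor
    · rintro ⟨h1, h2⟩; exact ⟨T.card, h2, h1, rfl⟩
    · rintro ⟨j, hj, hs, rfl⟩; exact ⟨hs, hj⟩
  rw [hsplit, Finset.card_biUnion]
  · exact Finset.sum_congr rfl fun j _ => Finset.card_powersetCard j _
  · intro i _ j _ hij
    simp only [Finset.disjoint_left]
    intro T hT hT'
    rw [Finset.mem_powersetCard] at hT hT'
    exact hij (hT.2 ▸ hT'.2 ▸ rfl)

/-- The weight class of a given D-set. -/
def classD {n : ℕ} (D : Finset (Fin n)) : Finset ((Fin n → Bool) × (Fin n → Bool)) :=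
  Finset.univ.filter fun z => Dset z = D

lemma card_classD {n : ℕ} (D : Finset (Fin n)) : (classD D).card = 2 ^ n := by
  have : (classD D).card = Fintype.card (Fin n → Bool) := by
    apply Finset.card_bij' (fun z _ => z.1)
      (fun a _ => ((a, fun i => if i ∈ D then !(a i) else a i) :
        (Fin n → Bool) × (Fin n → Bool)))
    · intro z hz
      exact Finset.mem_univ _
    · intro a _
      refine Finset.mem_filter.mpr ⟨Finset.mem_univ _, ?_⟩
      simp only [Dset]
      ext i
      by_cases hi : i ∈ D <;> simp [hi]
    · intro z hz
      replace hz := (Finset.mem_filter.mp hz).2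
      simp only [Dset] at hz
      refine Prod.ext rfl ?_
      funext i
      have : (i ∈ D) ↔ z.1 i ≠ z.2 i := by
        rw [← hz]; simp
      by_cases hi : i ∈ D
      · have := this.mp hi
        simp only [hi, if_true]
        cases h1 : z.1 i <;> cases h2 : z.2 i <;> simp_all
      · have := mt this.mpr hi
        simp only [hi, if_false]
        simp only [ne_eq, not_not] at this
        exact this
    · intro a _
      rfl
  rw [this]
  simp [Fintype.card_fun]

lemma ball_subset_classD {n k : ℕ} (x : (Fin n → Bool) × (Fin n → Bool)) :
    ball k x ⊆ classD (Dset x) := by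
  intro y hy
  simp only [ball, Finset.mem_image] at hy
  obtain ⟨T, _, rfl⟩ := hy
  simp [classD, Dset_flipB]

theorem ald_sphere_packing_bound (lam n r : ℕ) (hlam : 0 < lam) (hn : 0 < n) (hr : 0 < r)
    (C : Finset ((Fin n → Bool) × (Fin n → Bool)))
    (hC : ∀ x ∈ C, ∀ y ∈ C, x ≠ y → (2 * r + 1 : ℤ) ≤ ALD lam n x y) :
    (C.card : ℚ) ≤ 2 ^ n * ∑ l ∈ Finset.range (n + 1),
      (n.choose l : ℚ) / (∑ j ∈ Finset.range (r / lam + 1), (l.choose j : ℚ)) := by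
  set k := r / lam with hk
  set Sl : ℕ → ℕ := fun l => ∑ j ∈ Finset.range (k + 1), l.choose j with hSl
  have hSlpos : ∀ l, 0 < Sl l := by
    intro l
    have h0 : l.choose 0 ≤ Sl l :=
      Finset.single_le_sum (f := fun j => l.choose j) (fun _ _ => Nat.zero_le _)
        (Finset.mem_range.mpr (Nat.succ_pos k))
    simp only [Nat.choose_zero_right] at h0
    omega
  -- step 1: disjointness of balls within a class
  have hdisj : ∀ x ∈ C, ∀ y ∈ C, Dset x = Dset y → x ≠ y →
      Disjoint (ball k x) (ball k y) := by
    intro x hx y hy hD hxy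
    rw [Finset.disjoint_left]
    intro z hzx hzy
    simp only [ball, Finset.mem_image, Finset.mem_filter, Finset.mem_powerset] at hzx hzy
    obtain ⟨T, ⟨hTsub, hTcard⟩, hTz⟩ := hzx
    obtain ⟨T', ⟨hT'sub, hT'card⟩, hT'z⟩ := hzy
    have hy' : y = flipB (symmDiff T T') x := by
      have : flipB T' (flipB T x) = flipB T' (flipB T' y) := by rw [hTz, hT'z]
      rw [flipB_flipB, flipB_flipB, symmDiff_self] at this
      simp only [Finset.bot_eq_empty, flipB_empty] at this
      exact this.symm
    have hsub : symmDiff T T' ⊆ Dset x := by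
      intro i hi
      rw [Finset.mem_symmDiff] at hi
      rcases hi with ⟨hi, _⟩ | ⟨hi, _⟩
      · exact hTsub hi
      · exact hD ▸ hT'sub hi
    have hALD : ALD lam n x y = lam * (symmDiff T T').card := by
      rw [hy']; exact ALD_flipB lam n x _ hsub
    have hcard : (symmDiff T T').card ≤ 2 * k := by
      calc (symmDiff T T').card ≤ (T ∪ T').card := by
            apply Finset.card_le_card
            intro i hi
            rw [Finset.mem_symmDiff] at hi
            rcases hi with ⟨h, _⟩ | ⟨h, _⟩ <;> simp [h]
        _ ≤ T.card + T'.card := Finset.card_union_le _ _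
        _ ≤ 2 * k := by omega
    have hle : ALD lam n x y ≤ 2 * r := by
      rw [hALD]
      have : lam * (symmDiff T T').card ≤ lam * (2 * k) :=
        Nat.mul_le_mul_left lam hcard
      have h2 : lam * (2 * k) ≤ 2 * r := by
        have := Nat.div_mul_le_self r lam
        calc lam * (2 * k) = 2 * (k * lam) := by ring
          _ ≤ 2 * r := by
              apply Nat.mul_le_mul_left
              rw [hk]; exact Nat.div_mul_le_self r lam
      exact_mod_cast Nat.le_trans this h2
    have := hC x hx y hy hxy
    omega
  -- step 2: per-class counting
  have hclass : ∀ D ∈ (Finset.univ : Finset (Fin n)).powerset,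
      (C.filter fun x => Dset x = D).card * Sl D.card ≤ 2 ^ n := by
    intro D hD
    set CD := C.filter fun x => Dset x = D with hCD
    have hb : (CD.biUnion fun x => ball k x).card = ∑ x ∈ CD, (ball k x).card := by
      apply Finset.card_biUnion
      intro x hx y hy hxy
      rw [hCD, Finset.mem_coe, Finset.mem_filter] at hx hy
      exact hdisj x hx.1 y hy.1 (hx.2.trans hy.2.symm) hxy
    have hsub : (CD.biUnion fun x => ball k x) ⊆ classD D := by
      intro z hz
      rw [Finset.mem_biUnion] at hz
      obtain ⟨x, hx, hz⟩ := hz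
      rw [hCD, Finset.mem_filter] at hx
      exact hx.2 ▸ ball_subset_classD x hz
    have hle : (CD.biUnion fun x => ball k x).card ≤ 2 ^ n := by
      rw [← card_classD D]
      exact Finset.card_le_card hsub
    rw [hb] at hle
    have heq : ∑ x ∈ CD, (ball k x).card = CD.card * Sl D.card := by
      rw [Finset.sum_congr rfl (fun x hx => ?_), Finset.sum_const, smul_eq_mul]
      rw [hCD, Finset.mem_filter] at hx
      rw [card_ball, hx.2]
    rw [heq] at hle
    exact hle
  -- step 3: fiberwise decomposition of C by D-set
  have hfib : C.card = ∑ D ∈ (Finset.univ : Finset (Fin n)).powerset,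
      (C.filter fun x => Dset x = D).card := by
    apply Finset.card_eq_sum_card_fiberwise
    intro x _
    exact Finset.mem_powerset.mpr (Finset.subset_univ _)
  -- step 4: bound each fiber in ℚ
  have hQ : (C.card : ℚ) ≤ ∑ D ∈ (Finset.univ : Finset (Fin n)).powerset,
      (2 ^ n : ℚ) / Sl D.card := by
    rw [hfib]
    push_cast
    apply Finset.sum_le_sum
    intro D hD
    rw [le_div_iff₀ (by exact_mod_cast hSlpos D.card)]
    exact_mod_cast hclass D hD
  refine hQ.trans ?_
  -- step 5: group by cardinality
  have hgroup : ∑ D ∈ (Finset.univ : Finset (Fin n)).powerset, (2 ^ n : ℚ) / Sl D.card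
      = ∑ l ∈ Finset.range (n + 1), (n.choose l : ℚ) * ((2 ^ n : ℚ) / Sl l) := by
    rw [← Finset.sum_fiberwise_of_maps_to (g := Finset.card)
      (fun D hD => Finset.mem_range.mpr (Nat.lt_succ_of_le (by
        simpa using Finset.card_le_card (Finset.mem_powerset.mp hD))))]
    apply Finset.sum_congr rfl
    intro l _
    have hfilter : ((Finset.univ : Finset (Fin n)).powerset.filter fun D => D.card = l)
        = Finset.powersetCard l (Finset.univ : Finset (Fin n)) := by
      rw [Finset.powersetCard_eq_filter]
    rw [Finset.sum_congr hfilter (fun D hD => by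
      rw [(Finset.mem_powersetCard.mp hD).2]), Finset.sum_const,
      Finset.card_powersetCard, Finset.card_univ, Fintype.card_fin, nsmul_eq_mul]
  rw [hgroup, Finset.mul_sum]
  apply Finset.sum_le_sum
  intro l _
  have : ((Sl l : ℚ)) = ∑ j ∈ Finset.range (r / lam + 1), (l.choose j : ℚ) := by
    rw [hSl]; push_cast [hk]; ring
  rw [← this]
  rw [div_eq_mul_inv, div_eq_mul_inv]
  ring_nf
  exact le_refl _
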